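/- Let ρ be a density operator on a finite-dimensional complex Hilbert space and X a positive semidefinite operator with X ≤ id and 1 − tr(ρX) ≤ λ ≤ 1. Then the trace norm distance satisfies ‖ρ − √X ρ √X‖₁ ≤ √(8λ). -/

import Mathlib

open scoped BigOperators
open Matrix Filter Topology
open scoped ComplexOrder

namespace Matrix.PosSemidef

/-- The positive square root, as `Matrix.PosSemidef.sqrt` was defined in Mathlib (Dec 2024). -/
noncomputable def sqrt {n 𝕜 : Type*} [Fintype n] [DecidableEq n] [RCLike 𝕜]
    {A : Matrix n n 𝕜} (hA : A.PosSemidef) : Matrix n n 𝕜 :=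
  hA.1.eigenvectorUnitary.1 * diagonal ((↑) ∘ (√·) ∘ hA.1.eigenvalues) *
  (star hA.1.eigenvectorUnitary : Matrix n n 𝕜)

end Matrix.PosSemidef

/-- Trace norm (sum of singular values) of a complex matrix. -/
noncomputable def traceNorm {ι : Type*} [Fintype ι] [DecidableEq ι]
    (A : Matrix ι ι ℂ) : ℝ :=
  ((Matrix.posSemidef_conjTranspose_mul_self A).sqrt.trace).re

/-- A density operator: positive semidefinite with unit trace. -/
def IsDensity {ι : Type*} [Fintype ι] (ρ : Matrix ι ι ℂ) : Prop :=
  ρ.PosSemidef ∧ ρ.trace = 1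

/-- Von Neumann entropy `S(ρ) = -tr(ρ log ρ)` (base-2 logarithm), via eigenvalues. -/
noncomputable def vnEntropy {ι : Type*} [Fintype ι] [DecidableEq ι]
    (ρ : Matrix ι ι ℂ) : ℝ :=
  if h : ρ.IsHermitian then -∑ i, h.eigenvalues i * Real.logb 2 (h.eigenvalues i) else 0

/-- Holevo quantity `χ(P, {ρ_x})`. -/
noncomputable def holevo {X ι : Type*} [Fintype X] [Fintype ι] [DecidableEq ι]
    (P : X → ℝ) (ρ : X → Matrix ι ι ℂ) : ℝ :=
  vnEntropy (∑ x, (P x : ℂ) • ρ x) - ∑ x, P x * vnEntropy (ρ x)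

/-- The set of probability distributions on a finite type. -/
def FinDist (α : Type*) [Fintype α] : Type _ :=
  {p : α → ℝ // (∀ a, 0 ≤ p a) ∧ ∑ a, p a = 1}

/-- Tensor-product state corresponding to a codeword and a state sequence. -/
noncomputable def prodState {d n : ℕ} {X Θ' : Type*}
    (ρ : X → Θ' → Matrix (Fin d) (Fin d) ℂ) (c : Fin n → X) (t : Fin n → Θ') :
    Matrix (Fin n → Fin d) (Fin n → Fin d) ℂ :=
  fun a b => ∏ i, ρ (c i) (t i) (a i) (b i)

/-- A POVM: positive semidefinite operators summing to the identity. -/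
def IsPOVM {ι κ : Type*} [Fintype ι] [DecidableEq ι] [Fintype κ]
    (D : κ → Matrix ι ι ℂ) : Prop :=
  (∀ j, (D j).PosSemidef) ∧ ∑ j, D j = 1

/-- Average decoding error of a code under state sequence `t`. -/
noncomputable def avgError {d n : ℕ} {X Θ' : Type*} {J : ℕ}
    (ρ : X → Θ' → Matrix (Fin d) (Fin d) ℂ)
    (c : Fin J → Fin n → X)
    (D : Fin J → Matrix (Fin n → Fin d) (Fin n → Fin d) ℂ)
    (t : Fin n → Θ') : ℝ :=
  1 - (1 / (J : ℝ)) * ∑ j, ((prodState ρ (c j) t * D j).trace).re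

/-- Holevo quantity of an ensemble with uniform distribution. -/
noncomputable def uniformHolevo {ι : Type*} [Fintype ι] [DecidableEq ι] {J : ℕ}
    (τ : Fin J → Matrix ι ι ℂ) : ℝ :=
  vnEntropy ((J : ℂ)⁻¹ • ∑ j, τ j) - (1 / (J : ℝ)) * ∑ j, vnEntropy (τ j)

/-- Symmetrizability of a classical-quantum arbitrarily varying channel. -/
def Symmetrizable {d : ℕ} {X Θ' : Type*} [Fintype X] [Fintype Θ']
    (ρ : X → Θ' → Matrix (Fin d) (Fin d) ℂ) : Prop :=
  ∃ U : X → Θ' → ℝ, (∀ x, (∀ t, 0 ≤ U x t) ∧ ∑ t, U x t = 1) ∧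
    ∀ x x', ∑ t, (U x t : ℂ) • ρ x' t = ∑ t, (U x' t : ℂ) • ρ x t

/-- `R` is an achievable secrecy rate for the cq arbitrarily varying wiretap channel (no CSI). -/
def AchievableSecrecyRate {d : ℕ} {X Θ' : Type*} [Fintype X] [Fintype Θ']
    (ρ σ : X → Θ' → Matrix (Fin d) (Fin d) ℂ) (R : ℝ) : Prop :=
  ∀ ε > (0:ℝ), ∀ δ > (0:ℝ), ∀ ζ > (0:ℝ), ∃ N : ℕ, ∀ n ≥ N,
    ∃ J : ℕ, 0 < J ∧ ∃ c : Fin J → Fin n → X,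
      ∃ D : Fin J → Matrix (Fin n → Fin d) (Fin n → Fin d) ℂ, IsPOVM D ∧
        Real.logb 2 J / n > R - δ ∧
        (∀ t : Fin n → Θ', avgError ρ c D t < ε) ∧
        (∀ t : Fin n → Θ',
          (1 / (n : ℝ)) * uniformHolevo (fun j => prodState σ (c j) t) < ζ)

/-- `R` is an achievable secrecy rate with CSI at the transmitter. -/
def AchievableSecrecyRateCSI {d : ℕ} {X Θ' : Type*} [Fintype X] [Fintype Θ']
    (ρ σ : X → Θ' → Matrix (Fin d) (Fin d) ℂ) (R : ℝ) : Prop :=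
  ∀ ε > (0:ℝ), ∀ δ > (0:ℝ), ∀ ζ > (0:ℝ), ∃ N : ℕ, ∀ n ≥ N,
    ∃ J : ℕ, 0 < J ∧ ∃ c : (Fin n → Θ') → Fin J → Fin n → X,
      ∃ D : Fin J → Matrix (Fin n → Fin d) (Fin n → Fin d) ℂ, IsPOVM D ∧
        Real.logb 2 J / n > R - δ ∧
        (∀ t : Fin n → Θ', avgError ρ (c t) D t < ε) ∧
        (∀ t : Fin n → Θ',
          (1 / (n : ℝ)) * uniformHolevo (fun j => prodState σ (c t j) t) < ζ)

/-- Secrecy capacity (no CSI). -/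
noncomputable def secrecyCapacity {d : ℕ} {X Θ' : Type*} [Fintype X] [Fintype Θ']
    (ρ σ : X → Θ' → Matrix (Fin d) (Fin d) ℂ) : ℝ :=
  sSup {R : ℝ | 0 ≤ R ∧ AchievableSecrecyRate ρ σ R}

/-- Secrecy capacity with CSI at the transmitter. -/
noncomputable def secrecyCapacityCSI {d : ℕ} {X Θ' : Type*} [Fintype X] [Fintype Θ']
    (ρ σ : X → Θ' → Matrix (Fin d) (Fin d) ℂ) : ℝ :=
  sSup {R : ℝ | 0 ≤ R ∧ AchievableSecrecyRateCSI ρ σ R}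

/-- An orthogonal projection. -/
def IsProj {ι : Type*} [Fintype ι] (Q : Matrix ι ι ℂ) : Prop :=
  Qᴴ = Q ∧ Q * Q = Q

/-- Spectral projector of a Hermitian matrix onto the eigenvalues lying in `[lo, hi]`. -/
noncomputable def specProj {ι : Type*} [Fintype ι] [DecidableEq ι] {ρ : Matrix ι ι ℂ}
    (h : ρ.IsHermitian) (lo hi : ℝ) : Matrix ι ι ℂ :=
  (h.eigenvectorUnitary : Matrix ι ι ℂ) *
    Matrix.diagonal
      (fun k => if lo ≤ h.eigenvalues k ∧ h.eigenvalues k ≤ hi then (1 : ℂ) else 0) *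
    (h.eigenvectorUnitary : Matrix ι ι ℂ)ᴴ

/-- Tensor product of a family of `d × d` matrices. -/
noncomputable def tensorFam {d n : ℕ} (M : Fin n → Matrix (Fin d) (Fin d) ℂ) :
    Matrix (Fin n → Fin d) (Fin n → Fin d) ℂ :=
  Matrix.of fun a b => ∏ i, M i (a i) (b i)

open Classical in
noncomputable def invSqrt {ι : Type*} [Fintype ι] [DecidableEq ι]
    (M : Matrix ι ι ℂ) : Matrix ι ι ℂ :=
  if h : M.PosSemidef then (h.sqrt)⁻¹ else 0

lemma herm_spectral {n 𝕜 : Type*} [Fintype n] [DecidableEq n] [RCLike 𝕜]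
    {A : Matrix n n 𝕜} (hA : A.IsHermitian) :
    A = (hA.eigenvectorUnitary : Matrix n n 𝕜) * diagonal (RCLike.ofReal ∘ hA.eigenvalues) *
      (star hA.eigenvectorUnitary : Matrix n n 𝕜) := by
  have h := hA.spectral_theorem
  rwa [Unitary.conjStarAlgAut_apply] at h

namespace Matrix.PosSemidef

lemma posSemidef_sqrt {n 𝕜 : Type*} [Fintype n] [DecidableEq n] [RCLike 𝕜]
    {A : Matrix n n 𝕜} (hA : A.PosSemidef) : hA.sqrt.PosSemidef := by
  unfold sqrt
  exact PosSemidef.mul_mul_conjTranspose_same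
    (posSemidef_diagonal_iff.mpr fun i => RCLike.ofReal_nonneg.mpr (Real.sqrt_nonneg _)) _

lemma sqrt_mul_self {n 𝕜 : Type*} [Fintype n] [DecidableEq n] [RCLike 𝕜]
    {A : Matrix n n 𝕜} (hA : A.PosSemidef) : hA.sqrt * hA.sqrt = A := by
  have hU : (star hA.1.eigenvectorUnitary : Matrix n n 𝕜) * hA.1.eigenvectorUnitary.1 = 1 :=
    Matrix.mem_unitaryGroup_iff'.mp hA.1.eigenvectorUnitary.2
  unfold sqrt
  conv_rhs => rw [herm_spectral hA.1]
  calc _ = hA.1.eigenvectorUnitary.1 * diagonal ((↑) ∘ (√·) ∘ hA.1.eigenvalues) *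
        ((star hA.1.eigenvectorUnitary : Matrix n n 𝕜) * hA.1.eigenvectorUnitary.1) *
        diagonal ((↑) ∘ (√·) ∘ hA.1.eigenvalues) *
        (star hA.1.eigenvectorUnitary : Matrix n n 𝕜) := by simp only [Matrix.mul_assoc]
    _ = _ := by
      rw [hU, Matrix.mul_one, Matrix.mul_assoc _ (diagonal _) (diagonal _), diagonal_mul_diagonal]
      congr 3
      funext i
      simp only [Function.comp_apply, ← RCLike.ofReal_mul,
        Real.mul_self_sqrt (hA.eigenvalues_nonneg i)]

open scoped MatrixOrder in
lemma eq_sqrt_of_sq_eq {n 𝕜 : Type*} [Fintype n] [DecidableEq n] [RCLike 𝕜]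
    {B : Matrix n n 𝕜} (hB : B.PosSemidef) (A : Matrix n n 𝕜) (h : B ^ 2 = A) :
    B = (show A.PosSemidef by rw [← h]; exact hB.pow 2).sqrt := by
  have h1 : CFC.sqrt A = B := CFC.sqrt_unique (by rw [← h, sq]) hB.nonneg
  have h2 : CFC.sqrt A = (show A.PosSemidef by rw [← h]; exact hB.pow 2).sqrt :=
    CFC.sqrt_unique (sqrt_mul_self _) (posSemidef_sqrt _).nonneg
  exact h1.symm.trans h2

end Matrix.PosSemidef

section aux
variable {ι : Type*} [Fintype ι] [DecidableEq ι]

lemma cg_mul {V : Matrix ι ι ℂ} (hV : Vᴴ * V = 1) (f g : ι → ℝ) :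
    (V * diagonal (fun i => (f i : ℂ)) * Vᴴ) * (V * diagonal (fun i => (g i : ℂ)) * Vᴴ)
      = V * diagonal (fun i => ((f i * g i : ℝ) : ℂ)) * Vᴴ := by
  have h : ∀ M : Matrix ι ι ℂ, Vᴴ * (V * M) = M := fun M => by
    rw [← Matrix.mul_assoc, hV, Matrix.one_mul]
  calc (V * diagonal (fun i => (f i : ℂ)) * Vᴴ) * (V * diagonal (fun i => (g i : ℂ)) * Vᴴ)
      = V * (diagonal (fun i => (f i : ℂ)) * (Vᴴ * (V * (diagonal (fun i => (g i : ℂ)) * Vᴴ)))) := by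
        simp only [Matrix.mul_assoc]
    _ = V * (diagonal (fun i => (f i : ℂ)) * (diagonal (fun i => (g i : ℂ)) * Vᴴ)) := by rw [h]
    _ = V * diagonal (fun i => ((f i * g i : ℝ) : ℂ)) * Vᴴ := by
        simp only [← Matrix.mul_assoc, diagonal_mul_diagonal]
        push_cast; rfl

lemma cg_trace {V : Matrix ι ι ℂ} (hV : Vᴴ * V = 1) (f : ι → ℝ) :
    (V * diagonal (fun i => (f i : ℂ)) * Vᴴ).trace = ∑ i, (f i : ℂ) := by
  rw [Matrix.trace_mul_cycle, hV, Matrix.one_mul, trace_diagonal]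

lemma cg_herm (V : Matrix ι ι ℂ) (f : ι → ℝ) :
    (V * diagonal (fun i => (f i : ℂ)) * Vᴴ).IsHermitian := by
  have hd : (diagonal fun i => ((f i : ℝ) : ℂ))ᴴ = diagonal fun i => ((f i : ℝ) : ℂ) := by
    have hs : (star fun i => ((f i : ℝ) : ℂ)) = fun i => ((f i : ℝ) : ℂ) :=
      funext fun i => Complex.conj_ofReal _
    rw [diagonal_conjTranspose, hs]
  unfold Matrix.IsHermitian
  simp only [conjTranspose_mul, conjTranspose_conjTranspose, hd, Matrix.mul_assoc]

lemma cg_psd (V : Matrix ι ι ℂ) (f : ι → ℝ) (hf : ∀ i, 0 ≤ f i) :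
    (V * diagonal (fun i => (f i : ℂ)) * Vᴴ).PosSemidef :=
  PosSemidef.mul_mul_conjTranspose_same
    (posSemidef_diagonal_iff.mpr fun i => Complex.zero_le_real.mpr (hf i)) V

lemma cg_one {V : Matrix ι ι ℂ} (hV : V * Vᴴ = 1) :
    V * diagonal (fun _ : ι => ((1:ℝ) : ℂ)) * Vᴴ = 1 := by
  simp [diagonal_one, hV]

lemma cg_sub {V : Matrix ι ι ℂ} (f g : ι → ℝ) :
    V * diagonal (fun i => ((f i - g i : ℝ) : ℂ)) * Vᴴ
      = V * diagonal (fun i => (f i : ℂ)) * Vᴴ - V * diagonal (fun i => (g i : ℂ)) * Vᴴ := by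
  have : (diagonal fun i => ((f i - g i : ℝ) : ℂ))
      = diagonal (fun i => (f i : ℂ)) - diagonal (fun i => (g i : ℂ)) := by
    rw [diagonal_sub]; congr 1; funext i; push_cast; ring
  rw [this, Matrix.mul_sub, Matrix.sub_mul]

lemma trace_conjTranspose_mul (A B : Matrix ι ι ℂ) :
    (Aᴴ * B).trace = ∑ p : ι × ι, (starRingEnd ℂ) (A p.2 p.1) * B p.2 p.1 := by
  rw [Matrix.trace]
  simp only [Matrix.diag_apply, Matrix.mul_apply, conjTranspose_apply]
  rw [← Finset.sum_product']
  rfl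

lemma trace_CS (A B : Matrix ι ι ℂ) :
    ((Aᴴ * B).trace).re ≤ Real.sqrt ((Aᴴ * A).trace).re * Real.sqrt ((Bᴴ * B).trace).re := by
  let f : Matrix ι ι ℂ → EuclideanSpace ℂ (ι × ι) := fun M => WithLp.toLp 2 (fun p : ι × ι => M p.2 p.1)
  have hin : ∀ M N : Matrix ι ι ℂ, (inner ℂ (f M) (f N) : ℂ) = (Mᴴ * N).trace := by
    intro M N
    rw [trace_conjTranspose_mul]
    simp [PiLp.inner_apply, RCLike.inner_apply, f]
    exact Finset.sum_congr rfl fun p _ => mul_comm _ _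
  have hsq : ∀ M : Matrix ι ι ℂ, Real.sqrt ((Mᴴ * M).trace).re = ‖f M‖ := by
    intro M
    rw [← hin M M]
    have h2 : (inner ℂ (f M) (f M) : ℂ).re = ‖f M‖ ^ 2 := inner_self_eq_norm_sq (𝕜 := ℂ) _
    rw [h2, Real.sqrt_sq (norm_nonneg _)]
  rw [hsq, hsq, ← hin A B]
  calc (inner ℂ (f A) (f B) : ℂ).re ≤ ‖(inner ℂ (f A) (f B) : ℂ)‖ := Complex.re_le_norm _
    _ ≤ ‖f A‖ * ‖f B‖ := norm_inner_le_norm _ _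

lemma trace_psd_nonneg {M : Matrix ι ι ℂ} (hM : M.PosSemidef) : 0 ≤ (M.trace).re := by
  have h := hM.1.spectral_theorem
  rw [Unitary.conjStarAlgAut_apply, show (star (hM.1.eigenvectorUnitary : Matrix ι ι ℂ)) = (hM.1.eigenvectorUnitary : Matrix ι ι ℂ)ᴴ from rfl] at h
  have hV : ((hM.1.eigenvectorUnitary : Matrix ι ι ℂ))ᴴ * (hM.1.eigenvectorUnitary : Matrix ι ι ℂ) = 1 := by
    rw [← star_eq_conjTranspose]
    exact Matrix.mem_unitaryGroup_iff'.mp hM.1.eigenvectorUnitary.2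
  rw [h, show (Matrix.diagonal (RCLike.ofReal ∘ hM.1.eigenvalues) : Matrix ι ι ℂ)
      = diagonal (fun i => ((hM.1.eigenvalues i : ℝ) : ℂ)) from rfl, cg_trace hV]
  rw [Complex.re_sum]
  exact Finset.sum_nonneg fun i _ => by simpa using hM.eigenvalues_nonneg i

lemma trace_mul_psd_nonneg {A B : Matrix ι ι ℂ} (hA : A.PosSemidef) (hB : B.PosSemidef) :
    0 ≤ ((A * B).trace).re := by
  obtain ⟨T, hTh, hT⟩ : ∃ T : Matrix ι ι ℂ, Tᴴ = T ∧ T * T = B :=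
    ⟨hB.sqrt, hB.posSemidef_sqrt.1, hB.sqrt_mul_self⟩
  have h2 : (A * B).trace = (Tᴴ * A * T).trace := by
    rw [hTh, ← hT, ← Matrix.mul_assoc, Matrix.trace_mul_cycle]
  rw [h2]
  exact trace_psd_nonneg (hA.conjTranspose_mul_mul_same _)

lemma trace_mul_mono {ρ A B : Matrix ι ι ℂ} (hρ : ρ.PosSemidef)
    (h : (B - A).PosSemidef) : ((ρ * A).trace).re ≤ ((ρ * B).trace).re := by
  have h1 : ((ρ * (B - A)).trace).re = ((ρ * B).trace).re - ((ρ * A).trace).re := by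
    rw [Matrix.mul_sub, Matrix.trace_sub, Complex.sub_re]
  have h2 := trace_mul_psd_nonneg hρ h
  linarith

lemma eig_le_one {X : Matrix ι ι ℂ} (hX : X.PosSemidef) (h1 : (1 - X).PosSemidef) (i : ι) :
    hX.1.eigenvalues i ≤ 1 := by
  set v : EuclideanSpace ℂ ι := hX.1.eigenvectorBasis i
  have hnorm : ‖v‖ = 1 := hX.1.eigenvectorBasis.orthonormal.1 i
  have hdot : star (⇑v) ⬝ᵥ (⇑v) = (1 : ℂ) := by
    have := EuclideanSpace.inner_eq_star_dotProduct v v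
    rw [dotProduct_comm, ← this]
    have h2 : (inner ℂ v v : ℂ) = (‖v‖ : ℂ) ^ 2 := inner_self_eq_norm_sq_to_K v
    rw [h2, hnorm]; norm_num
  have hmv : X *ᵥ ⇑v = (hX.1.eigenvalues i : ℂ) • ⇑v := by
    have := hX.1.mulVec_eigenvectorBasis i
    rw [this]; ext j; simp [Complex.real_smul, v]
  have hp := h1.dotProduct_mulVec_nonneg (⇑v)
  rw [Matrix.sub_mulVec, Matrix.one_mulVec, dotProduct_sub, hmv, dotProduct_smul, hdot] at hp
  simp only [smul_eq_mul, mul_one] at hp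
  have hp' : (0:ℂ) ≤ ((1 - hX.1.eigenvalues i : ℝ) : ℂ) := by
    convert hp using 1
    push_cast; ring
  have := Complex.zero_le_real.mp hp'
  linarith

end aux


/-- **Gentle measurement lemma.** If `ρ` is a density operator, `0 ≤ X ≤ id` and
`1 - tr(ρX) ≤ λ ≤ 1`, then `‖ρ - √X ρ √X‖₁ ≤ √(8λ)`. -/
theorem gentle_measurement {d : ℕ} (ρ X : Matrix (Fin d) (Fin d) ℂ)
    (hρ : IsDensity ρ) (hX : X.PosSemidef) (hXle : (1 - X).PosSemidef)
    (lam : ℝ) (hlam₁ : 1 - ((ρ * X).trace).re ≤ lam) (hlam₂ : lam ≤ 1) :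
    traceNorm (ρ - hX.sqrt * ρ * hX.sqrt) ≤ Real.sqrt (8 * lam) := by
  obtain ⟨hρpsd, hρtr⟩ := hρ
  set S := hX.sqrt with hSdef
  have hSherm : Sᴴ = S := hX.posSemidef_sqrt.1
  have hSS : S * S = X := hX.sqrt_mul_self
  -- eigenbasis of X
  set lamX := hX.1.eigenvalues with hlamXdef
  set V : Matrix (Fin d) (Fin d) ℂ := (hX.1.eigenvectorUnitary : Matrix (Fin d) (Fin d) ℂ) with hVdef
  have hV1 : Vᴴ * V = 1 := by
    rw [← star_eq_conjTranspose]
    exact Matrix.mem_unitaryGroup_iff'.mp hX.1.eigenvectorUnitary.2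
  have hV2 : V * Vᴴ = 1 := by
    rw [← star_eq_conjTranspose]
    exact Matrix.mem_unitaryGroup_iff.mp hX.1.eigenvectorUnitary.2
  have hXeq : X = V * diagonal (fun i => ((lamX i : ℝ) : ℂ)) * Vᴴ := hX.1.spectral_theorem
  have hSeq : S = V * diagonal (fun i => ((Real.sqrt (lamX i) : ℝ) : ℂ)) * Vᴴ := rfl
  have hlam0 : ∀ i, 0 ≤ lamX i := hX.eigenvalues_nonneg
  have hlam1 : ∀ i, lamX i ≤ 1 := eig_le_one hX hXle
  -- Q := 1 - S
  set Q : Matrix (Fin d) (Fin d) ℂ := 1 - S with hQdef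
  have hQeq : Q = V * diagonal (fun i => ((1 - Real.sqrt (lamX i) : ℝ) : ℂ)) * Vᴴ := by
    rw [hQdef, cg_sub (fun _ => (1:ℝ)) (fun i => Real.sqrt (lamX i)), cg_one hV2, ← hSeq]
  have hQherm : Qᴴ = Q := by
    rw [hQeq]; exact cg_herm V _
  have hkey : ((1 - X) - Q * Q).PosSemidef := by
    have hQQ : Q * Q = V * diagonal (fun i =>
        (((1 - Real.sqrt (lamX i)) * (1 - Real.sqrt (lamX i)) : ℝ) : ℂ)) * Vᴴ := by
      rw [hQeq, cg_mul hV1]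
    have h1X : (1 : Matrix (Fin d) (Fin d) ℂ) - X
        = V * diagonal (fun i => ((1 - lamX i : ℝ) : ℂ)) * Vᴴ := by
      rw [cg_sub (fun _ => (1:ℝ)) lamX, cg_one hV2, ← hXeq]
    have : (1 - X) - Q * Q = V * diagonal (fun i =>
        (((1 - lamX i) - (1 - Real.sqrt (lamX i)) * (1 - Real.sqrt (lamX i)) : ℝ) : ℂ)) * Vᴴ := by
      rw [cg_sub (fun i => 1 - lamX i)
        (fun i => (1 - Real.sqrt (lamX i)) * (1 - Real.sqrt (lamX i))), ← h1X, ← hQQ]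
    rw [this]
    refine cg_psd V _ fun i => ?_
    have hr0 : 0 ≤ Real.sqrt (lamX i) := Real.sqrt_nonneg _
    have hr1 : Real.sqrt (lamX i) ≤ 1 := Real.sqrt_le_one.mpr (hlam1 i)
    have hrsq : Real.sqrt (lamX i) ^ 2 = lamX i := Real.sq_sqrt (hlam0 i)
    nlinarith
  have hQpsd : Q.PosSemidef := by
    rw [hQeq]
    exact cg_psd V _ fun i => by
      have := Real.sqrt_le_one.mpr (hlam1 i); linarith
  -- square root of ρ
  obtain ⟨T, hTherm, hTT⟩ : ∃ T : Matrix (Fin d) (Fin d) ℂ, Tᴴ = T ∧ T * T = ρ :=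
    ⟨hρpsd.sqrt, hρpsd.posSemidef_sqrt.1, hρpsd.sqrt_mul_self⟩
  -- Δ and its eigen-decomposition
  set Δ : Matrix (Fin d) (Fin d) ℂ := ρ - S * ρ * S with hΔdef
  have hΔherm : Δ.IsHermitian := by
    show Δᴴ = Δ
    rw [hΔdef]
    simp only [conjTranspose_sub, conjTranspose_mul, hSherm, hρpsd.1.eq, Matrix.mul_assoc]
  set μ := hΔherm.eigenvalues with hμdef
  set W : Matrix (Fin d) (Fin d) ℂ := (hΔherm.eigenvectorUnitary : Matrix (Fin d) (Fin d) ℂ) with hWdef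
  have hW1 : Wᴴ * W = 1 := by
    rw [← star_eq_conjTranspose]
    exact Matrix.mem_unitaryGroup_iff'.mp hΔherm.eigenvectorUnitary.2
  have hW2 : W * Wᴴ = 1 := by
    rw [← star_eq_conjTranspose]
    exact Matrix.mem_unitaryGroup_iff.mp hΔherm.eigenvectorUnitary.2
  have hΔeq : Δ = W * diagonal (fun i => ((μ i : ℝ) : ℂ)) * Wᴴ := hΔherm.spectral_theorem
  -- traceNorm Δ = ∑ |μ i|
  set R : Matrix (Fin d) (Fin d) ℂ := W * diagonal (fun i => ((|μ i| : ℝ) : ℂ)) * Wᴴ with hRdef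
  have hRpsd : R.PosSemidef := cg_psd W _ fun i => abs_nonneg _
  have hRsq : R ^ 2 = Δᴴ * Δ := by
    rw [pow_two, hRdef, cg_mul hW1, hΔherm.eq, hΔeq, cg_mul hW1]
    have h : (fun i => ((|μ i| * |μ i| : ℝ) : ℂ)) = fun i => ((μ i * μ i : ℝ) : ℂ) := by
      funext i; rw [abs_mul_abs_self]
    rw [h]
  have hsqrtR : (Matrix.posSemidef_conjTranspose_mul_self Δ).sqrt = R :=
    (hRpsd.eq_sqrt_of_sq_eq _ hRsq).symm
  have htn : traceNorm Δ = ∑ i, |μ i| := by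
    unfold traceNorm
    rw [hsqrtR, hRdef, cg_trace hW1, Complex.re_sum]
    simp
  -- the sign unitary U
  set s : Fin d → ℝ := fun i => if μ i < 0 then -1 else 1 with hsdef
  set U : Matrix (Fin d) (Fin d) ℂ := W * diagonal (fun i => ((s i : ℝ) : ℂ)) * Wᴴ with hUdef
  have hUherm : Uᴴ = U := cg_herm W _
  have hUU : U * U = 1 := by
    rw [hUdef, cg_mul hW1]
    have : (fun i => ((s i * s i : ℝ) : ℂ)) = fun _ : Fin d => ((1:ℝ) : ℂ) := by
      funext i; rw [hsdef]; by_cases h : μ i < 0 <;> simp [h]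
    rw [this, cg_one hW2]
  have hUΔ : ((U * Δ).trace).re = ∑ i, |μ i| := by
    rw [hUdef, hΔeq, cg_mul hW1, cg_trace hW1, Complex.re_sum]
    have : ∀ i, s i * μ i = |μ i| := fun i => by
      rw [hsdef]
      by_cases h : μ i < 0
      · simp [h, abs_of_neg h]
      · simp [h, abs_of_nonneg (not_lt.mp h)]
    simp only [Complex.ofReal_re]
    exact Finset.sum_congr rfl fun i _ => this i
  -- key trace bounds
  have hQ2lam : ((ρ * (Q * Q)).trace).re ≤ lam := by
    have h1 : ((ρ * (Q * Q)).trace).re ≤ ((ρ * (1 - X)).trace).re := trace_mul_mono hρpsd hkey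
    have h2 : ((ρ * (1 - X)).trace).re = 1 - ((ρ * X).trace).re := by
      rw [Matrix.mul_sub, Matrix.mul_one, Matrix.trace_sub, Complex.sub_re, hρtr]
      simp
    linarith
  have hρX1 : ((ρ * X).trace).re ≤ 1 := by
    have := trace_mul_mono hρpsd hXle
    rwa [Matrix.mul_one, hρtr, show ((1:ℂ)).re = 1 from rfl] at this
  have hlamnn : 0 ≤ lam := by linarith
  -- decomposition
  have hdecomp : U * Δ = U * (Q * ρ) + U * (S * ρ * Q) := by
    have h : Δ = Q * ρ + S * ρ * Q := by
      rw [hΔdef, hQdef]; noncomm_ring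
    rw [h, Matrix.mul_add]
  -- term 1
  set A₁ : Matrix (Fin d) (Fin d) ℂ := U * T with hA₁def
  set B₁ : Matrix (Fin d) (Fin d) ℂ := Q * T with hB₁def
  have hA₁c : A₁ᴴ = T * U := by rw [hA₁def, conjTranspose_mul, hTherm, hUherm]
  have hB₁c : B₁ᴴ = T * Q := by rw [hB₁def, conjTranspose_mul, hTherm, hQherm]
  have e1 : (U * (Q * ρ)).trace = (A₁ᴴ * B₁).trace := by
    rw [← hTT, hA₁c, hB₁def]
    have h : U * (Q * (T * T)) = (U * (Q * T)) * T := by noncomm_ring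
    rw [h, Matrix.trace_mul_comm]
    congr 1
    noncomm_ring
  have hA₁A : (A₁ᴴ * A₁).trace = ρ.trace := by
    rw [hA₁c, hA₁def, ← hTT]
    refine congrArg Matrix.trace ?_
    calc T * U * (U * T) = T * (U * U) * T := by noncomm_ring
      _ = T * T := by rw [hUU, Matrix.mul_one]
  have hB₁B : ((B₁ᴴ * B₁).trace).re ≤ lam := by
    have h : (B₁ᴴ * B₁).trace = (ρ * (Q * Q)).trace := by
      rw [hB₁c, hB₁def, ← hTT]
      calc (T * Q * (Q * T)).trace = (T * (Q * Q) * T).trace := by noncomm_ring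
        _ = (T * T * (Q * Q)).trace := by rw [Matrix.trace_mul_cycle]
    rw [h]; exact hQ2lam
  have hc1 : ((U * (Q * ρ)).trace).re ≤ Real.sqrt lam := by
    rw [e1]
    calc ((A₁ᴴ * B₁).trace).re
        ≤ Real.sqrt ((A₁ᴴ * A₁).trace).re * Real.sqrt ((B₁ᴴ * B₁).trace).re := trace_CS _ _
      _ ≤ 1 * Real.sqrt lam := by
          apply mul_le_mul
          · rw [hA₁A, hρtr]; simp
          · exact Real.sqrt_le_sqrt hB₁B
          · exact Real.sqrt_nonneg _
          · norm_num
      _ = Real.sqrt lam := one_mul _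
  -- term 2
  set B₂ : Matrix (Fin d) (Fin d) ℂ := U * (S * T) with hB₂def
  have hB₂c : B₂ᴴ = T * S * U := by
    rw [hB₂def, conjTranspose_mul, conjTranspose_mul, hTherm, hSherm, hUherm]
  have e2 : (U * (S * ρ * Q)).trace = (B₁ᴴ * B₂).trace := by
    rw [← hTT, hB₁c, hB₂def]
    have h : U * (S * (T * T) * Q) = (U * (S * T)) * (T * Q) := by noncomm_ring
    rw [h, Matrix.trace_mul_comm]
  have hB₂B : ((B₂ᴴ * B₂).trace).re ≤ 1 := by
    have h : (B₂ᴴ * B₂).trace = (ρ * X).trace := by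
      rw [hB₂c, hB₂def, ← hTT, ← hSS]
      calc (T * S * U * (U * (S * T))).trace = (T * (S * (U * U) * S) * T).trace := by noncomm_ring
        _ = (T * (S * S) * T).trace := by rw [hUU]; noncomm_ring
        _ = (T * T * (S * S)).trace := by rw [Matrix.trace_mul_cycle]
    rw [h]; exact hρX1
  have hc2 : ((U * (S * ρ * Q)).trace).re ≤ Real.sqrt lam := by
    rw [e2]
    calc ((B₁ᴴ * B₂).trace).re
        ≤ Real.sqrt ((B₁ᴴ * B₁).trace).re * Real.sqrt ((B₂ᴴ * B₂).trace).re := trace_CS _ _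
      _ ≤ Real.sqrt lam * 1 := by
          apply mul_le_mul
          · exact Real.sqrt_le_sqrt hB₁B
          · calc Real.sqrt ((B₂ᴴ * B₂).trace).re ≤ Real.sqrt 1 := Real.sqrt_le_sqrt hB₂B
              _ = 1 := Real.sqrt_one
          · exact Real.sqrt_nonneg _
          · exact Real.sqrt_nonneg _
      _ = Real.sqrt lam := mul_one _
  -- put it together
  have hmain : traceNorm Δ ≤ 2 * Real.sqrt lam := by
    rw [htn, ← hUΔ, hdecomp, Matrix.trace_add, Complex.add_re]
    linarith
  have hfin : 2 * Real.sqrt lam ≤ Real.sqrt (8 * lam) := by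
    have h4 : 2 * Real.sqrt lam = Real.sqrt (4 * lam) := by
      rw [Real.sqrt_mul (by norm_num : (0:ℝ) ≤ 4), show Real.sqrt 4 = 2 by
        rw [show (4:ℝ) = 2 ^ 2 by norm_num, Real.sqrt_sq (by norm_num : (0:ℝ) ≤ 2)]]
    rw [h4]
    exact Real.sqrt_le_sqrt (by linarith)
  exact le_trans hmain hfin
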